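/- Let H be a 3-regular finite simple graph containing a triangle with vertices u, v, w, and let u', v', w' be the neighbors of u, v, w, respectively, outside the triangle. Suppose u', v', w' are pairwise distinct. If H − {u,v,w} admits an injective edge-coloring with 7 colors, then H admits an injective edge-coloring with 7 colors. -/

import Mathlib

open SimpleGraph

/-- Two distinct edges of `G` *conflict* if they are at distance exactly 1 in `G`
(they share no endpoint but some endpoint of one is adjacent to some endpoint of the
other), or they lie in a common triangle of `G`. -/
def EdgeConflict {V : Type*} (G : SimpleGraph V) (e₁ e₂ : Sym2 V) : Prop :=
  e₁ ≠ e₂ ∧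
    (((∀ u ∈ e₁, u ∉ e₂) ∧ ∃ u ∈ e₁, ∃ v ∈ e₂, G.Adj u v) ∨
      (∃ a b c : V, G.Adj a b ∧ G.Adj b c ∧ G.Adj a c ∧
        e₁ ∈ ({s(a, b), s(b, c), s(a, c)} : Set (Sym2 V)) ∧
        e₂ ∈ ({s(a, b), s(b, c), s(a, c)} : Set (Sym2 V))))

/-- An injective edge-coloring of `G` with `k` colors. -/
def IsInjEdgeColoring {V : Type*} (G : SimpleGraph V) {k : ℕ} (f : Sym2 V → Fin k) : Prop :=
  ∀ e₁ ∈ G.edgeSet, ∀ e₂ ∈ G.edgeSet, EdgeConflict G e₁ e₂ → f e₁ ≠ f e₂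

/-- The injective chromatic index of `G`. -/
noncomputable def injChromIndex {V : Type*} (G : SimpleGraph V) : ℕ :=
  sInf {k : ℕ | ∃ f : Sym2 V → Fin k, IsInjEdgeColoring G f}

section PrismLemmas

lemma pick3 {L : Finset (Fin 7)} (h : 3 ≤ L.card) (x y : Fin 7) :
    ∃ z ∈ L, z ≠ x ∧ z ≠ y := by
  have hne : (L \ {x, y}).Nonempty := by
    rw [Finset.sdiff_nonempty]
    intro hsub
    have := (Finset.card_le_card hsub).trans (Finset.card_insert_le _ _)
    simp at this
    omega
  obtain ⟨z, hz⟩ := hne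
  rw [Finset.mem_sdiff, Finset.mem_insert, Finset.mem_singleton] at hz
  exact ⟨z, hz.1, fun h => hz.2 (Or.inl h), fun h => hz.2 (Or.inr h)⟩

lemma coreA (LA LB LC LA' LB' LC' : Finset (Fin 7))
    (hA : 3 ≤ LA.card) (hC : 3 ≤ LC.card)
    (hA' : 3 ≤ LA'.card) (hB' : 3 ≤ LB'.card) (hC' : 3 ≤ LC'.card)
    (c : Fin 7) (hcB : c ∈ LB) (hcA : c ∉ LA) :
    ∃ a ∈ LA, ∃ b ∈ LB, ∃ cc ∈ LC, ∃ a' ∈ LA', ∃ b' ∈ LB', ∃ c' ∈ LC',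
      a ≠ b ∧ a ≠ cc ∧ b ≠ cc ∧ a' ≠ b' ∧ a' ≠ c' ∧ b' ≠ c' ∧ a ≠ a' ∧ b ≠ b' ∧ cc ≠ c' := by
  obtain ⟨b', hb', hb'1, -⟩ := pick3 hB' c c
  obtain ⟨a', ha', ha'1, -⟩ := pick3 hA' b' b'
  obtain ⟨c', hc', hc'1, hc'2⟩ := pick3 hC' a' b'
  obtain ⟨cc, hcc, hcc1, hcc2⟩ := pick3 hC c c'
  obtain ⟨a, ha, ha1, ha2⟩ := pick3 hA cc a'
  exact ⟨a, ha, c, hcB, cc, hcc, a', ha', b', hb', c', hc',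
    fun h => hcA (h ▸ ha), ha1, hcc1.symm, ha'1, hc'1.symm, hc'2.symm, ha2, hb'1.symm, hcc2⟩

lemma coreB (LA LB LC LA' LB' LC' : Finset (Fin 7))
    (hA : 3 ≤ LA.card) (hB : 3 ≤ LB.card) (hC : 3 ≤ LC.card)
    (hB' : 3 ≤ LB'.card) (hC' : 3 ≤ LC'.card)
    (c : Fin 7) (hcA' : c ∈ LA') (hcA : c ∉ LA) :
    ∃ a ∈ LA, ∃ b ∈ LB, ∃ cc ∈ LC, ∃ a' ∈ LA', ∃ b' ∈ LB', ∃ c' ∈ LC',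
      a ≠ b ∧ a ≠ cc ∧ b ≠ cc ∧ a' ≠ b' ∧ a' ≠ c' ∧ b' ≠ c' ∧ a ≠ a' ∧ b ≠ b' ∧ cc ≠ c' := by
  obtain ⟨b', hb', hb'1, -⟩ := pick3 hB' c c
  obtain ⟨c', hc', hc'1, hc'2⟩ := pick3 hC' c b'
  obtain ⟨b, hb, hb1, -⟩ := pick3 hB b' b'
  obtain ⟨cc, hcc, hcc1, hcc2⟩ := pick3 hC b c'
  obtain ⟨a, ha, ha1, ha2⟩ := pick3 hA b cc
  exact ⟨a, ha, b, hb, cc, hcc, c, hcA', b', hb', c', hc',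
    ha1, ha2, hcc1.symm, hb'1.symm, hc'1.symm, hc'2.symm, fun h => hcA (h ▸ ha), hb1, hcc2⟩

lemma coreEq (S : Finset (Fin 7)) (h : 3 ≤ S.card) :
    ∃ a ∈ S, ∃ b ∈ S, ∃ cc ∈ S, ∃ a' ∈ S, ∃ b' ∈ S, ∃ c' ∈ S,
      a ≠ b ∧ a ≠ cc ∧ b ≠ cc ∧ a' ≠ b' ∧ a' ≠ c' ∧ b' ≠ c' ∧ a ≠ a' ∧ b ≠ b' ∧ cc ≠ c' := by
  obtain ⟨a, ha, -, -⟩ := pick3 h 0 0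
  obtain ⟨b, hb, hb1, -⟩ := pick3 h a a
  obtain ⟨c, hc, hc1, hc2⟩ := pick3 h a b
  exact ⟨a, ha, b, hb, c, hc, b, hb, c, hc, a, ha,
    hb1.symm, hc1.symm, hc2.symm, hc2.symm, hb1, hc1, hb1.symm, hc2.symm, hc1⟩

set_option linter.unreachableTactic false in
set_option linter.unusedTactic false in
lemma prismColor (L0 L1 L2 L3 L4 L5 : Finset (Fin 7))
    (h0 : 3 ≤ L0.card) (h1 : 3 ≤ L1.card) (h2 : 3 ≤ L2.card)
    (h3 : 3 ≤ L3.card) (h4 : 3 ≤ L4.card) (h5 : 3 ≤ L5.card) :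
    ∃ c0 ∈ L0, ∃ c1 ∈ L1, ∃ c2 ∈ L2, ∃ c3 ∈ L3, ∃ c4 ∈ L4, ∃ c5 ∈ L5,
      c0 ≠ c1 ∧ c0 ≠ c2 ∧ c1 ≠ c2 ∧ c3 ≠ c4 ∧ c3 ≠ c5 ∧ c4 ≠ c5 ∧
      c0 ≠ c3 ∧ c1 ≠ c4 ∧ c2 ≠ c5 := by
  have key : ∀ (A B : Finset (Fin 7)), A ≠ B → (∃ c, c ∈ A ∧ c ∉ B) ∨ (∃ c, c ∈ B ∧ c ∉ A) := by
    intro A B hne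
    by_contra hcon
    push_neg at hcon
    exact hne (Finset.Subset.antisymm hcon.1 hcon.2)
  by_cases e01 : L0 = L1
  · by_cases e02 : L0 = L2
    · by_cases e03 : L0 = L3
      · by_cases e34 : L3 = L4
        · by_cases e35 : L3 = L5
          · subst e01 e02 e03 e34 e35
            exact coreEq L0 h0
          · rcases key _ _ e35 with ⟨c, hc3, hc5⟩ | ⟨c, hc5, hc3⟩
            · obtain ⟨a,ha,b,hb,cc,hcc,a',ha',b',hb',c',hc',
                H1,H2,H3,H4,H5,H6,H7,H8,H9⟩ := coreA L5 L3 L4 L2 L0 L1 h5 h4 h2 h0 h1 c hc3 hc5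
              refine ⟨b',hb',c',hc',a',ha',b,hb,cc,hcc,a,ha,?_,?_,?_,?_,?_,?_,?_,?_,?_⟩ <;>
                first | assumption | (symm; assumption)
            · obtain ⟨a,ha,b,hb,cc,hcc,a',ha',b',hb',c',hc',
                H1,H2,H3,H4,H5,H6,H7,H8,H9⟩ := coreA L3 L5 L4 L0 L2 L1 h3 h4 h0 h2 h1 c hc5 hc3
              refine ⟨a',ha',c',hc',b',hb',a,ha,cc,hcc,b,hb,?_,?_,?_,?_,?_,?_,?_,?_,?_⟩ <;>
                first | assumption | (symm; assumption)
        · rcases key _ _ e34 with ⟨c, hc3, hc4⟩ | ⟨c, hc4, hc3⟩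
          · obtain ⟨a,ha,b,hb,cc,hcc,a',ha',b',hb',c',hc',
              H1,H2,H3,H4,H5,H6,H7,H8,H9⟩ := coreA L4 L3 L5 L1 L0 L2 h4 h5 h1 h0 h2 c hc3 hc4
            refine ⟨b',hb',a',ha',c',hc',b,hb,a,ha,cc,hcc,?_,?_,?_,?_,?_,?_,?_,?_,?_⟩ <;>
              first | assumption | (symm; assumption)
          · obtain ⟨a,ha,b,hb,cc,hcc,a',ha',b',hb',c',hc',
              H1,H2,H3,H4,H5,H6,H7,H8,H9⟩ := coreA L3 L4 L5 L0 L1 L2 h3 h5 h0 h1 h2 c hc4 hc3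
            refine ⟨a',ha',b',hb',c',hc',a,ha,b,hb,cc,hcc,?_,?_,?_,?_,?_,?_,?_,?_,?_⟩ <;>
              first | assumption | (symm; assumption)
      · rcases key _ _ e03 with ⟨c, hc0, hc3⟩ | ⟨c, hc3, hc0⟩
        · obtain ⟨a,ha,b,hb,cc,hcc,a',ha',b',hb',c',hc',
            H1,H2,H3,H4,H5,H6,H7,H8,H9⟩ := coreB L3 L4 L5 L0 L1 L2 h3 h4 h5 h1 h2 c hc0 hc3
          refine ⟨a',ha',b',hb',c',hc',a,ha,b,hb,cc,hcc,?_,?_,?_,?_,?_,?_,?_,?_,?_⟩ <;>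
            first | assumption | (symm; assumption)
        · obtain ⟨a,ha,b,hb,cc,hcc,a',ha',b',hb',c',hc',
            H1,H2,H3,H4,H5,H6,H7,H8,H9⟩ := coreB L0 L1 L2 L3 L4 L5 h0 h1 h2 h4 h5 c hc3 hc0
          refine ⟨a,ha,b,hb,cc,hcc,a',ha',b',hb',c',hc',?_,?_,?_,?_,?_,?_,?_,?_,?_⟩ <;>
            first | assumption | (symm; assumption)
    · rcases key _ _ e02 with ⟨c, hc0, hc2⟩ | ⟨c, hc2, hc0⟩
      · obtain ⟨a,ha,b,hb,cc,hcc,a',ha',b',hb',c',hc',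
          H1,H2,H3,H4,H5,H6,H7,H8,H9⟩ := coreA L2 L0 L1 L5 L3 L4 h2 h1 h5 h3 h4 c hc0 hc2
        refine ⟨b,hb,cc,hcc,a,ha,b',hb',c',hc',a',ha',?_,?_,?_,?_,?_,?_,?_,?_,?_⟩ <;>
          first | assumption | (symm; assumption)
      · obtain ⟨a,ha,b,hb,cc,hcc,a',ha',b',hb',c',hc',
          H1,H2,H3,H4,H5,H6,H7,H8,H9⟩ := coreA L0 L2 L1 L3 L5 L4 h0 h1 h3 h5 h4 c hc2 hc0
        refine ⟨a,ha,cc,hcc,b,hb,a',ha',c',hc',b',hb',?_,?_,?_,?_,?_,?_,?_,?_,?_⟩ <;>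
          first | assumption | (symm; assumption)
  · rcases key _ _ e01 with ⟨c, hc0, hc1⟩ | ⟨c, hc1, hc0⟩
    · obtain ⟨a,ha,b,hb,cc,hcc,a',ha',b',hb',c',hc',
        H1,H2,H3,H4,H5,H6,H7,H8,H9⟩ := coreA L1 L0 L2 L4 L3 L5 h1 h2 h4 h3 h5 c hc0 hc1
      refine ⟨b,hb,a,ha,cc,hcc,b',hb',a',ha',c',hc',?_,?_,?_,?_,?_,?_,?_,?_,?_⟩ <;>
        first | assumption | (symm; assumption)
    · obtain ⟨a,ha,b,hb,cc,hcc,a',ha',b',hb',c',hc',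
        H1,H2,H3,H4,H5,H6,H7,H8,H9⟩ := coreA L0 L1 L2 L3 L4 L5 h0 h2 h3 h4 h5 c hc1 hc0
      refine ⟨a,ha,b,hb,cc,hcc,a',ha',b',hb',c',hc',?_,?_,?_,?_,?_,?_,?_,?_,?_⟩ <;>
        first | assumption | (symm; assumption)

end PrismLemmas

section ConflictLemmas

lemma conflict_symm {V : Type*} {G : SimpleGraph V} {e₁ e₂ : Sym2 V}
    (h : EdgeConflict G e₁ e₂) : EdgeConflict G e₂ e₁ := by
  obtain ⟨hne, h⟩ := h
  refine ⟨hne.symm, ?_⟩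
  rcases h with ⟨hdisj, p, hp, q, hq, hpq⟩ | ⟨a, b, c, h1, h2, h3, hm1, hm2⟩
  · exact Or.inl ⟨fun z hz2 hz1 => hdisj z hz1 hz2, q, hq, p, hp, hpq.symm⟩
  · exact Or.inr ⟨a, b, c, h1, h2, h3, hm2, hm1⟩

set_option linter.unusedTactic false in
lemma conflict_lift {V : Type*} (H : SimpleGraph V) (S : Set V) {x₁ y₁ x₂ y₂ : V}
    (hx₁ : x₁ ∈ S) (hy₁ : y₁ ∈ S) (hx₂ : x₂ ∈ S) (hy₂ : y₂ ∈ S)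
    (hc : EdgeConflict H s(x₁, y₁) s(x₂, y₂)) :
    EdgeConflict (H.induce S) s((⟨x₁, hx₁⟩ : S), ⟨y₁, hy₁⟩) s((⟨x₂, hx₂⟩ : S), ⟨y₂, hy₂⟩) := by
  obtain ⟨hne, h⟩ := hc
  have hadj : ∀ (a b : S), H.Adj a b → (H.induce S).Adj a b := by
    intro a b hab
    simpa only [comap_adj, Function.Embedding.coe_subtype] using hab
  have hval1 : ∀ z : S, z ∈ s((⟨x₁, hx₁⟩ : S), ⟨y₁, hy₁⟩) → (z : V) ∈ s(x₁, y₁) := by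
    intro z hz
    rw [Sym2.mem_iff] at hz ⊢
    rcases hz with rfl | rfl
    exacts [Or.inl rfl, Or.inr rfl]
  have hval2 : ∀ z : S, z ∈ s((⟨x₂, hx₂⟩ : S), ⟨y₂, hy₂⟩) → (z : V) ∈ s(x₂, y₂) := by
    intro z hz
    rw [Sym2.mem_iff] at hz ⊢
    rcases hz with rfl | rfl
    exacts [Or.inl rfl, Or.inr rfl]
  constructor
  · intro hEq
    apply hne
    have := congrArg (Sym2.map (Subtype.val : S → V)) hEq
    rwa [Sym2.map_pair_eq, Sym2.map_pair_eq] at this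
  rcases h with ⟨hdisj, p, hp, q, hq, hpq⟩ | ⟨a, b, c, h1, h2, h3, hm1, hm2⟩
  · left
    refine ⟨fun z hz1 hz2 => hdisj (z : V) (hval1 z hz1) (hval2 z hz2), ?_⟩
    rw [Sym2.mem_iff] at hp hq
    rcases hp with rfl | rfl <;> rcases hq with rfl | rfl
    · exact ⟨⟨p, hx₁⟩, Sym2.mem_mk_left _ _, ⟨q, hx₂⟩, Sym2.mem_mk_left _ _, hadj _ _ hpq⟩
    · exact ⟨⟨p, hx₁⟩, Sym2.mem_mk_left _ _, ⟨q, hy₂⟩, Sym2.mem_mk_right _ _, hadj _ _ hpq⟩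
    · exact ⟨⟨p, hy₁⟩, Sym2.mem_mk_right _ _, ⟨q, hx₂⟩, Sym2.mem_mk_left _ _, hadj _ _ hpq⟩
    · exact ⟨⟨p, hy₁⟩, Sym2.mem_mk_right _ _, ⟨q, hy₂⟩, Sym2.mem_mk_right _ _, hadj _ _ hpq⟩
  · right
    simp only [Set.mem_insert_iff, Set.mem_singleton_iff] at hm1 hm2
    have hmem1 : ∀ z : V, z ∈ s(x₁, y₁) → z ∈ S := by
      intro z hz; rw [Sym2.mem_iff] at hz; rcases hz with rfl | rfl <;> assumption
    have hmem2 : ∀ z : V, z ∈ s(x₂, y₂) → z ∈ S := by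
      intro z hz; rw [Sym2.mem_iff] at hz; rcases hz with rfl | rfl <;> assumption
    have habc : a ∈ S ∧ b ∈ S ∧ c ∈ S := by
      rcases hm1 with h | h | h <;> rcases hm2 with h' | h' | h' <;>
        first
          | exact absurd (h.trans h'.symm) hne
          | (refine ⟨?_, ?_, ?_⟩ <;>
              first
                | (apply hmem1; rw [h]; simp; done)
                | (apply hmem2; rw [h']; simp; done))
    obtain ⟨ha, hb, hc⟩ := habc
    refine ⟨⟨a, ha⟩, ⟨b, hb⟩, ⟨c, hc⟩, hadj _ _ h1, hadj _ _ h2, hadj _ _ h3, ?_, ?_⟩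
    · have key : ∀ (z z' : V) (hz : z ∈ S) (hz' : z' ∈ S), s(x₁, y₁) = s(z, z') →
          s((⟨x₁, hx₁⟩ : S), ⟨y₁, hy₁⟩) = s((⟨z, hz⟩ : S), ⟨z', hz'⟩) := by
        intro z z' hz hz' hEq
        rw [Sym2.eq_iff] at hEq ⊢
        rcases hEq with ⟨h1', h2'⟩ | ⟨h1', h2'⟩
        · exact Or.inl ⟨Subtype.ext h1', Subtype.ext h2'⟩
        · exact Or.inr ⟨Subtype.ext h1', Subtype.ext h2'⟩
      rcases hm1 with h | h | h
      · exact Or.inl (key _ _ ha hb h)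
      · exact Or.inr (Or.inl (key _ _ hb hc h))
      · exact Or.inr (Or.inr (key _ _ ha hc h))
    · have key : ∀ (z z' : V) (hz : z ∈ S) (hz' : z' ∈ S), s(x₂, y₂) = s(z, z') →
          s((⟨x₂, hx₂⟩ : S), ⟨y₂, hy₂⟩) = s((⟨z, hz⟩ : S), ⟨z', hz'⟩) := by
        intro z z' hz hz' hEq
        rw [Sym2.eq_iff] at hEq ⊢
        rcases hEq with ⟨h1', h2'⟩ | ⟨h1', h2'⟩
        · exact Or.inl ⟨Subtype.ext h1', Subtype.ext h2'⟩
        · exact Or.inr ⟨Subtype.ext h1', Subtype.ext h2'⟩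
      rcases hm2 with h | h | h
      · exact Or.inl (key _ _ ha hb h)
      · exact Or.inr (Or.inl (key _ _ hb hc h))
      · exact Or.inr (Or.inr (key _ _ ha hc h))

end ConflictLemmas

/-- Deleting a triangle from a 3-regular graph: if the outside-neighbors `u', v', w'`
of the triangle `u v w` are pairwise distinct and `H - {u,v,w}` has an injective
edge-coloring with 7 colors, then so does `H`. -/
theorem extend_coloring_triangle {V : Type*} [Fintype V] (H : SimpleGraph V)
    [DecidableRel H.Adj] (hreg : ∀ x : V, H.degree x = 3)
    (u v w u' v' w' : V)
    (huv : H.Adj u v) (hvw : H.Adj v w) (huw : H.Adj u w)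
    (hu' : H.Adj u u') (hu'out : u' ∉ ({u, v, w} : Set V))
    (hv' : H.Adj v v') (hv'out : v' ∉ ({u, v, w} : Set V))
    (hw' : H.Adj w w') (hw'out : w' ∉ ({u, v, w} : Set V))
    (hdist : u' ≠ v' ∧ u' ≠ w' ∧ v' ≠ w')
    (hcol : ∃ f : Sym2 (({u, v, w}ᶜ : Set V)) → Fin 7,
      IsInjEdgeColoring (H.induce ({u, v, w}ᶜ : Set V)) f) :
    ∃ f : Sym2 V → Fin 7, IsInjEdgeColoring H f := by
  classical
  obtain ⟨hu'v', hu'w', hv'w'⟩ := hdist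
  obtain ⟨f, hf⟩ := hcol
  have hne3 : ∀ {z : V}, z ∉ ({u, v, w} : Set V) → z ≠ u ∧ z ≠ v ∧ z ≠ w := by
    intro z hz
    refine ⟨?_, ?_, ?_⟩ <;> rintro rfl <;> apply hz <;> simp
  obtain ⟨hu'u, hu'v, hu'w⟩ := hne3 hu'out
  obtain ⟨hv'u, hv'v, hv'w⟩ := hne3 hv'out
  obtain ⟨hw'u, hw'v, hw'w⟩ := hne3 hw'out
  have huK : u ∈ ({u, v, w} : Set V) := by simp
  have hvK : v ∈ ({u, v, w} : Set V) := by simp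
  have hwK : w ∈ ({u, v, w} : Set V) := by simp
  -- neighborhood lemmas
  have hnbhd : ∀ x a b c : V, a ≠ b → a ≠ c → b ≠ c → H.Adj x a → H.Adj x b → H.Adj x c →
      ∀ z, H.Adj x z → z = a ∨ z = b ∨ z = c := by
    intro x a b c hab hac hbc ha hb hc z hz
    have hsub : ({a, b, c} : Finset V) ⊆ H.neighborFinset x := by
      intro t ht
      simp only [Finset.mem_insert, Finset.mem_singleton] at ht
      rw [SimpleGraph.mem_neighborFinset]
      rcases ht with rfl | rfl | rfl <;> assumption
    have hcard : ({a, b, c} : Finset V).card = 3 := by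
      rw [Finset.card_insert_of_notMem (by simp [hab, hac]),
        Finset.card_insert_of_notMem (by simp [hbc]), Finset.card_singleton]
    have heq : ({a, b, c} : Finset V) = H.neighborFinset x :=
      Finset.eq_of_subset_of_card_le hsub
        (by rw [hcard, SimpleGraph.card_neighborFinset_eq_degree, hreg])
    have hzin : z ∈ ({a, b, c} : Finset V) := by
      rw [heq, SimpleGraph.mem_neighborFinset]; exact hz
    rw [Finset.mem_insert, Finset.mem_insert, Finset.mem_singleton] at hzin
    exact hzin
  have hext : ∀ x a : V, H.Adj x a → ∃ b c : V, b ≠ c ∧ H.Adj x b ∧ H.Adj x c ∧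
      (∀ z, H.Adj x z → z = a ∨ z = b ∨ z = c) := by
    intro x a ha
    have hmem : a ∈ H.neighborFinset x := (SimpleGraph.mem_neighborFinset _ _ _).mpr ha
    have hcard : ((H.neighborFinset x).erase a).card = 2 := by
      rw [Finset.card_erase_of_mem hmem, SimpleGraph.card_neighborFinset_eq_degree, hreg]
    obtain ⟨b, c, hbc, habc⟩ := Finset.card_eq_two.mp hcard
    have hb : b ∈ (H.neighborFinset x).erase a := by rw [habc]; simp
    have hc : c ∈ (H.neighborFinset x).erase a := by rw [habc]; simp
    refine ⟨b, c, hbc,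
      (SimpleGraph.mem_neighborFinset _ _ _).mp (Finset.mem_of_mem_erase hb),
      (SimpleGraph.mem_neighborFinset _ _ _).mp (Finset.mem_of_mem_erase hc), ?_⟩
    intro z hz
    by_cases hza : z = a
    · exact Or.inl hza
    · have : z ∈ (H.neighborFinset x).erase a :=
        Finset.mem_erase.mpr ⟨hza, (SimpleGraph.mem_neighborFinset _ _ _).mpr hz⟩
      rw [habc] at this
      rw [Finset.mem_insert, Finset.mem_singleton] at this
      exact Or.inr this
  have Nu : ∀ z, H.Adj u z → z = v ∨ z = w ∨ z = u' :=
    hnbhd u v w u' hvw.ne hu'v.symm hu'w.symm huv huw hu'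
  have Nv : ∀ z, H.Adj v z → z = u ∨ z = w ∨ z = v' :=
    hnbhd v u w v' huw.ne hv'u.symm hv'w.symm huv.symm hvw hv'
  have Nw : ∀ z, H.Adj w z → z = u ∨ z = v ∨ z = w' :=
    hnbhd w u v w' huv.ne hw'u.symm hw'v.symm huw.symm hvw.symm hw'
  -- non-adjacencies
  have hnvu' : ¬H.Adj v u' := by
    intro h; rcases Nv u' h with h' | h' | h'
    exacts [hu'u h', hu'w h', hu'v' h']
  have hnwu' : ¬H.Adj w u' := by
    intro h; rcases Nw u' h with h' | h' | h'
    exacts [hu'u h', hu'v h', hu'w' h']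
  have hnuv' : ¬H.Adj u v' := by
    intro h; rcases Nu v' h with h' | h' | h'
    exacts [hv'v h', hv'w h', hu'v' h'.symm]
  have hnwv' : ¬H.Adj w v' := by
    intro h; rcases Nw v' h with h' | h' | h'
    exacts [hv'u h', hv'v h', hv'w' h']
  have hnuw' : ¬H.Adj u w' := by
    intro h; rcases Nu w' h with h' | h' | h'
    exacts [hw'v h', hw'w h', hu'w' h'.symm]
  have hnvw' : ¬H.Adj v w' := by
    intro h; rcases Nv w' h with h' | h' | h'
    exacts [hw'u h', hw'w h', hv'w' h'.symm]
  -- triangles meeting {u,v,w} are inside {u,v,w}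
  have triKbase : ∀ x y z : V, H.Adj x y → H.Adj y z → H.Adj x z → x ∈ ({u, v, w} : Set V) →
      y ∈ ({u, v, w} : Set V) ∧ z ∈ ({u, v, w} : Set V) := by
    intro x y z hxy hyz hxz hx
    simp only [Set.mem_insert_iff, Set.mem_singleton_iff] at hx
    rcases hx with rfl | rfl | rfl
    · rcases Nu y hxy with rfl | rfl | rfl <;> rcases Nu z hxz with rfl | rfl | rfl <;>
        first
          | exact ⟨hvK, hwK⟩ | exact ⟨hwK, hvK⟩
          | exact (hyz.ne rfl).elim
          | exact (hnvu' hyz).elim | exact (hnvu' hyz.symm).elim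
          | exact (hnwu' hyz).elim | exact (hnwu' hyz.symm).elim
    · rcases Nv y hxy with rfl | rfl | rfl <;> rcases Nv z hxz with rfl | rfl | rfl <;>
        first
          | exact ⟨huK, hwK⟩ | exact ⟨hwK, huK⟩
          | exact (hyz.ne rfl).elim
          | exact (hnuv' hyz).elim | exact (hnuv' hyz.symm).elim
          | exact (hnwv' hyz).elim | exact (hnwv' hyz.symm).elim
    · rcases Nw y hxy with rfl | rfl | rfl <;> rcases Nw z hxz with rfl | rfl | rfl <;>
        first
          | exact ⟨huK, hvK⟩ | exact ⟨hvK, huK⟩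
          | exact (hyz.ne rfl).elim
          | exact (hnuw' hyz).elim | exact (hnuw' hyz.symm).elim
          | exact (hnvw' hyz).elim | exact (hnvw' hyz.symm).elim
  have triK : ∀ x y z : V, H.Adj x y → H.Adj y z → H.Adj x z →
      (x ∈ ({u, v, w} : Set V) ∨ y ∈ ({u, v, w} : Set V) ∨ z ∈ ({u, v, w} : Set V)) →
      x ∈ ({u, v, w} : Set V) ∧ y ∈ ({u, v, w} : Set V) ∧ z ∈ ({u, v, w} : Set V) := by
    intro x y z hxy hyz hxz hmem
    rcases hmem with hm | hm | hm
    · obtain ⟨h1, h2⟩ := triKbase x y z hxy hyz hxz hm; exact ⟨hm, h1, h2⟩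
    · obtain ⟨h1, h2⟩ := triKbase y x z hxy.symm hxz hyz hm; exact ⟨h1, hm, h2⟩
    · obtain ⟨h1, h2⟩ := triKbase z x y hxz.symm hxy hyz.symm hm; exact ⟨h1, h2, hm⟩
  have tri_no : ∀ α β γ : V, H.Adj α β → H.Adj β γ → H.Adj α γ → ∀ a b x y : V,
      a ∈ ({u, v, w} : Set V) → x ∉ ({u, v, w} : Set V) →
      s(a, b) ∈ ({s(α, β), s(β, γ), s(α, γ)} : Set (Sym2 V)) →
      s(x, y) ∈ ({s(α, β), s(β, γ), s(α, γ)} : Set (Sym2 V)) → False := by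
    intro α β γ h1 h2 h3 a b x y haK hxK hm1 hm2
    have hall := triK α β γ h1 h2 h3 (by
      simp only [Set.mem_insert_iff, Set.mem_singleton_iff] at hm1
      rcases hm1 with h | h | h <;> rw [Sym2.eq_iff] at h <;>
        rcases h with ⟨h', -⟩ | ⟨h', -⟩ <;> subst h' <;>
        first
          | exact Or.inl haK
          | exact Or.inr (Or.inl haK)
          | exact Or.inr (Or.inr haK))
    obtain ⟨hA, hB, hC⟩ := hall
    apply hxK
    simp only [Set.mem_insert_iff, Set.mem_singleton_iff] at hm2
    rcases hm2 with h | h | h <;> rw [Sym2.eq_iff] at h <;>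
      rcases h with ⟨h', -⟩ | ⟨h', -⟩ <;> rw [h'] <;>
      first | exact hA | exact hB | exact hC
  have hKedge : ∀ α β γ : V, H.Adj α β → H.Adj β γ → H.Adj α γ → ∀ a a' : V,
      a ∈ ({u, v, w} : Set V) → a' ∉ ({u, v, w} : Set V) →
      s(a, a') ∈ ({s(α, β), s(β, γ), s(α, γ)} : Set (Sym2 V)) → False := by
    intro α β γ h1 h2 h3 a a' haK ha'K hmem
    have hall := triK α β γ h1 h2 h3 (by
      simp only [Set.mem_insert_iff, Set.mem_singleton_iff] at hmem
      rcases hmem with h | h | h <;> rw [Sym2.eq_iff] at h <;>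
        rcases h with ⟨h', -⟩ | ⟨h', -⟩ <;> subst h' <;>
        first
          | exact Or.inl haK
          | exact Or.inr (Or.inl haK)
          | exact Or.inr (Or.inr haK))
    obtain ⟨hA, hB, hC⟩ := hall
    apply ha'K
    simp only [Set.mem_insert_iff, Set.mem_singleton_iff] at hmem
    rcases hmem with h | h | h <;> rw [Sym2.eq_iff] at h <;>
      rcases h with ⟨-, h'⟩ | ⟨-, h'⟩ <;> rw [h'] <;>
      first | exact hA | exact hB | exact hC
  have nc : ∀ a a' : V, a ∈ ({u, v, w} : Set V) → a' ∉ ({u, v, w} : Set V) →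
      ∀ e₁ : Sym2 V, a ∈ e₁ → EdgeConflict H e₁ s(a, a') → False := by
    intro a a' haK ha'K e₁ hmem hconf
    obtain ⟨hne, hor⟩ := hconf
    rcases hor with ⟨hdisj, -⟩ | ⟨α, β, γ, h1, h2, h3, -, hm2⟩
    · exact hdisj a hmem (Sym2.mem_mk_left a a')
    · exact hKedge α β γ h1 h2 h3 a a' haK ha'K hm2
  -- second neighborhoods
  obtain ⟨p1, p2, hp12, hu'p1, hu'p2, Nu'⟩ := hext u' u hu'.symm
  obtain ⟨q1, q2, -, -, -, Np1⟩ := hext p1 u' hu'p1.symm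
  obtain ⟨q3, q4, -, -, -, Np2⟩ := hext p2 u' hu'p2.symm
  obtain ⟨s1, s2, hs12, hv's1, hv's2, Nv'⟩ := hext v' v hv'.symm
  obtain ⟨t1, t2, -, -, -, Ns1⟩ := hext s1 v' hv's1.symm
  obtain ⟨t3, t4, -, -, -, Ns2⟩ := hext s2 v' hv's2.symm
  obtain ⟨m1, m2, hm12, hw'm1, hw'm2, Nw'⟩ := hext w' w hw'.symm
  obtain ⟨n1, n2, -, -, -, Nm1⟩ := hext m1 w' hw'm1.symm
  obtain ⟨n3, n4, -, -, -, Nm2⟩ := hext m2 w' hw'm2.symm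
  -- the extension map
  have hu'c : u' ∈ ({u, v, w}ᶜ : Set V) := hu'out
  set π : V → ({u, v, w}ᶜ : Set V) :=
    fun x => if h : x ∈ ({u, v, w}ᶜ : Set V) then ⟨x, h⟩ else ⟨u', hu'c⟩ with hπdef
  set ft : Sym2 V → Fin 7 := fun e => f (Sym2.map π e) with hftdef
  have hπ : ∀ (x : V) (hx : x ∈ ({u, v, w}ᶜ : Set V)), π x = ⟨x, hx⟩ := by
    intro x hx
    simp only [hπdef]
    exact dif_pos hx
  have hftv : ∀ (x y : V) (hx : x ∈ ({u, v, w}ᶜ : Set V)) (hy : y ∈ ({u, v, w}ᶜ : Set V)),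
      ft s(x, y) = f s((⟨x, hx⟩ : ({u, v, w}ᶜ : Set V)), ⟨y, hy⟩) := by
    intro x y hx hy
    simp only [hftdef]
    rw [Sym2.map_pair_eq, hπ x hx, hπ y hy]
  have hedge : ∀ (x y : V) (hx : x ∈ ({u, v, w}ᶜ : Set V)) (hy : y ∈ ({u, v, w}ᶜ : Set V)),
      H.Adj x y → s((⟨x, hx⟩ : ({u, v, w}ᶜ : Set V)), ⟨y, hy⟩) ∈
        (H.induce ({u, v, w}ᶜ : Set V)).edgeSet := by
    intro x y hx hy hxy
    rw [SimpleGraph.mem_edgeSet]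
    simpa only [comap_adj, Function.Embedding.coe_subtype] using hxy
  -- choose colors
  have hcard4 : ∀ a b c d : Fin 7, 3 ≤ ((Finset.univ : Finset (Fin 7)) \ {a, b, c, d}).card := by
    intro a b c d
    have h1 : ({a, b, c, d} : Finset (Fin 7)).card ≤ 4 := by
      have i1 := Finset.card_insert_le a ({b, c, d} : Finset (Fin 7))
      have i2 := Finset.card_insert_le b ({c, d} : Finset (Fin 7))
      have i3 := Finset.card_insert_le c ({d} : Finset (Fin 7))
      have i4 : ({d} : Finset (Fin 7)).card = 1 := Finset.card_singleton d
      omega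
    rw [Finset.card_sdiff_of_subset (Finset.subset_univ _)]
    have h2 : (Finset.univ : Finset (Fin 7)).card = 7 := by simp
    omega
  obtain ⟨c0, hc0, c1, hc1, c2, hc2, c3, hc3, c4, hc4, c5, hc5,
    G1, G2, G3, G4, G5, G6, G7, G8, G9⟩ :=
    prismColor
      (Finset.univ \ {ft s(u', p1), ft s(u', p2), ft s(v', s1), ft s(v', s2)})
      (Finset.univ \ {ft s(v', s1), ft s(v', s2), ft s(w', m1), ft s(w', m2)})
      (Finset.univ \ {ft s(u', p1), ft s(u', p2), ft s(w', m1), ft s(w', m2)})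
      (Finset.univ \ {ft s(m1, n1), ft s(m1, n2), ft s(m2, n3), ft s(m2, n4)})
      (Finset.univ \ {ft s(p1, q1), ft s(p1, q2), ft s(p2, q3), ft s(p2, q4)})
      (Finset.univ \ {ft s(s1, t1), ft s(s1, t2), ft s(s2, t3), ft s(s2, t4)})
      (hcard4 _ _ _ _) (hcard4 _ _ _ _) (hcard4 _ _ _ _)
      (hcard4 _ _ _ _) (hcard4 _ _ _ _) (hcard4 _ _ _ _)
  have hc0n := (Finset.mem_sdiff.mp hc0).2
  have hc1n := (Finset.mem_sdiff.mp hc1).2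
  have hc2n := (Finset.mem_sdiff.mp hc2).2
  have hc3n := (Finset.mem_sdiff.mp hc3).2
  have hc4n := (Finset.mem_sdiff.mp hc4).2
  have hc5n := (Finset.mem_sdiff.mp hc5).2
  -- the coloring
  set g : Sym2 V → Fin 7 := fun e =>
    if e = s(u, v) then c0 else if e = s(v, w) then c1 else if e = s(u, w) then c2
    else if e = s(w, w') then c3 else if e = s(u, u') then c4 else if e = s(v, v') then c5
    else ft e with hgdef
  have hsne1 : ∀ a b c d : V, a ≠ c → a ≠ d → s(a, b) ≠ s(c, d) := by
    intro a b c d h1 h2 h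
    rw [Sym2.eq_iff] at h
    rcases h with ⟨h3, -⟩ | ⟨h3, -⟩
    exacts [h1 h3, h2 h3]
  have hsne2 : ∀ a b c d : V, b ≠ c → b ≠ d → s(a, b) ≠ s(c, d) := by
    intro a b c d h1 h2 h
    rw [Sym2.eq_iff] at h
    rcases h with ⟨-, h3⟩ | ⟨-, h3⟩
    exacts [h2 h3, h1 h3]
  have guv : g s(u, v) = c0 := by
    simp only [hgdef]
    rw [if_true]
  have gvw : g s(v, w) = c1 := by
    simp only [hgdef]
    rw [if_neg (hsne2 v w u v huw.ne' hvw.ne'), if_true]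
  have guw : g s(u, w) = c2 := by
    simp only [hgdef]
    rw [if_neg (hsne2 u w u v huw.ne' hvw.ne'), if_neg (hsne1 u w v w huv.ne huw.ne),
      if_true]
  have gww' : g s(w, w') = c3 := by
    simp only [hgdef]
    rw [if_neg (hsne1 w w' u v huw.ne' hvw.ne'), if_neg (hsne2 w w' v w hw'v hw'w),
      if_neg (hsne2 w w' u w hw'u hw'w), if_true]
  have guu' : g s(u, u') = c4 := by
    simp only [hgdef]
    rw [if_neg (hsne2 u u' u v hu'u hu'v), if_neg (hsne1 u u' v w huv.ne huw.ne),
      if_neg (hsne2 u u' u w hu'u hu'w), if_neg (hsne1 u u' w w' huw.ne hw'u.symm),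
      if_true]
  have gvv' : g s(v, v') = c5 := by
    simp only [hgdef]
    rw [if_neg (hsne2 v v' u v hv'u hv'v), if_neg (hsne2 v v' v w hv'v hv'w),
      if_neg (hsne1 v v' u w huv.ne' hvw.ne), if_neg (hsne1 v v' w w' hvw.ne hw'v.symm),
      if_neg (hsne1 v v' u u' huv.ne' hu'v.symm), if_true]
  have gold : ∀ x y : V, x ∉ ({u, v, w} : Set V) → y ∉ ({u, v, w} : Set V) →
      g s(x, y) = ft s(x, y) := by
    intro x y hx hy
    have hnotin : ∀ z z' : V, z ∈ ({u, v, w} : Set V) → s(x, y) ≠ s(z, z') := by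
      intro z z' hz h
      rw [Sym2.eq_iff] at h
      rcases h with ⟨rfl, rfl⟩ | ⟨rfl, rfl⟩
      exacts [hx hz, hy hz]
    simp only [hgdef]
    rw [if_neg (hnotin u v huK), if_neg (hnotin v w hvK), if_neg (hnotin u w huK),
      if_neg (hnotin w w' hwK), if_neg (hnotin u u' huK), if_neg (hnotin v v' hvK)]
  -- conflicts between an edge of the triangle and an outside edge
  have tri_old : ∀ a b c3 a' b' pa1 pa2 pb1 pb2 : V,
      a ∈ ({u, v, w} : Set V) → b ∈ ({u, v, w} : Set V) → c3 ∈ ({u, v, w} : Set V) →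
      (∀ z, H.Adj a z → z = b ∨ z = c3 ∨ z = a') →
      (∀ z, H.Adj b z → z = a ∨ z = c3 ∨ z = b') →
      (∀ z, H.Adj a' z → z = a ∨ z = pa1 ∨ z = pa2) →
      (∀ z, H.Adj b' z → z = b ∨ z = pb1 ∨ z = pb2) →
      ∀ x y : V, H.Adj x y → x ∉ ({u, v, w} : Set V) → y ∉ ({u, v, w} : Set V) →
      EdgeConflict H s(a, b) s(x, y) →
        ft s(x, y) = ft s(a', pa1) ∨ ft s(x, y) = ft s(a', pa2) ∨
        ft s(x, y) = ft s(b', pb1) ∨ ft s(x, y) = ft s(b', pb2) := by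
    intro a b c3 a' b' pa1 pa2 pb1 pb2 haK hbK hcK Na Nb Na' Nb' x y hxy hx hy hconf
    obtain ⟨hne, hor⟩ := hconf
    rcases hor with ⟨hdisj, p, hp, q, hq, hpq⟩ | ⟨α, β, γ, h1, h2, h3, hm1, hm2⟩
    · rw [Sym2.mem_iff] at hp hq
      rcases hp with rfl | rfl
      · rcases Na q hpq with rfl | rfl | rfl
        · rcases hq with rfl | rfl
          exacts [(hx hbK).elim, (hy hbK).elim]
        · rcases hq with rfl | rfl
          exacts [(hx hcK).elim, (hy hcK).elim]
        · rcases hq with rfl | rfl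
          · rcases Na' y hxy with rfl | rfl | rfl
            exacts [(hy haK).elim, Or.inl rfl, Or.inr (Or.inl rfl)]
          · rcases Na' x hxy.symm with rfl | rfl | rfl
            exacts [(hx haK).elim, Or.inl (congrArg ft Sym2.eq_swap),
              Or.inr (Or.inl (congrArg ft Sym2.eq_swap))]
      · rcases Nb q hpq with rfl | rfl | rfl
        · rcases hq with rfl | rfl
          exacts [(hx haK).elim, (hy haK).elim]
        · rcases hq with rfl | rfl
          exacts [(hx hcK).elim, (hy hcK).elim]
        · rcases hq with rfl | rfl
          · rcases Nb' y hxy with rfl | rfl | rfl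
            exacts [(hy hbK).elim, Or.inr (Or.inr (Or.inl rfl)),
              Or.inr (Or.inr (Or.inr rfl))]
          · rcases Nb' x hxy.symm with rfl | rfl | rfl
            exacts [(hx hbK).elim, Or.inr (Or.inr (Or.inl (congrArg ft Sym2.eq_swap))),
              Or.inr (Or.inr (Or.inr (congrArg ft Sym2.eq_swap)))]
    · exact (tri_no α β γ h1 h2 h3 a b x y haK hx hm1 hm2).elim
  -- conflicts between a pendant edge and an outside edge
  have pend_old : ∀ a b c3 a' pa1 pa2 qa1 qa2 qb1 qb2 : V,
      a ∈ ({u, v, w} : Set V) → b ∈ ({u, v, w} : Set V) → c3 ∈ ({u, v, w} : Set V) →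
      (∀ z, H.Adj a z → z = b ∨ z = c3 ∨ z = a') →
      (∀ z, H.Adj a' z → z = a ∨ z = pa1 ∨ z = pa2) →
      (∀ z, H.Adj pa1 z → z = a' ∨ z = qa1 ∨ z = qa2) →
      (∀ z, H.Adj pa2 z → z = a' ∨ z = qb1 ∨ z = qb2) →
      ∀ x y : V, H.Adj x y → x ∉ ({u, v, w} : Set V) → y ∉ ({u, v, w} : Set V) →
      EdgeConflict H s(a, a') s(x, y) →
        ft s(x, y) = ft s(pa1, qa1) ∨ ft s(x, y) = ft s(pa1, qa2) ∨
        ft s(x, y) = ft s(pa2, qb1) ∨ ft s(x, y) = ft s(pa2, qb2) := by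
    intro a b c3 a' pa1 pa2 qa1 qa2 qb1 qb2 haK hbK hcK Na Na' Np1 Np2 x y hxy hx hy hconf
    obtain ⟨hne, hor⟩ := hconf
    rcases hor with ⟨hdisj, p, hp, q, hq, hpq⟩ | ⟨α, β, γ, h1, h2, h3, hm1, hm2⟩
    · have ha'e : a' ∉ s(x, y) := hdisj a' (Sym2.mem_mk_right a a')
      rw [Sym2.mem_iff] at hp hq
      rcases hp with rfl | rfl
      · rcases Na q hpq with rfl | rfl | rfl
        · rcases hq with rfl | rfl
          exacts [(hx hbK).elim, (hy hbK).elim]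
        · rcases hq with rfl | rfl
          exacts [(hx hcK).elim, (hy hcK).elim]
        · rcases hq with rfl | rfl
          exacts [(ha'e (Sym2.mem_mk_left _ _)).elim, (ha'e (Sym2.mem_mk_right _ _)).elim]
      · rcases Na' q hpq with rfl | rfl | rfl
        · rcases hq with rfl | rfl
          exacts [(hx haK).elim, (hy haK).elim]
        · rcases hq with rfl | rfl
          · rcases Np1 y hxy with rfl | rfl | rfl
            exacts [(ha'e (Sym2.mem_mk_right _ _)).elim, Or.inl rfl, Or.inr (Or.inl rfl)]
          · rcases Np1 x hxy.symm with rfl | rfl | rfl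
            exacts [(ha'e (Sym2.mem_mk_left _ _)).elim, Or.inl (congrArg ft Sym2.eq_swap),
              Or.inr (Or.inl (congrArg ft Sym2.eq_swap))]
        · rcases hq with rfl | rfl
          · rcases Np2 y hxy with rfl | rfl | rfl
            exacts [(ha'e (Sym2.mem_mk_right _ _)).elim, Or.inr (Or.inr (Or.inl rfl)),
              Or.inr (Or.inr (Or.inr rfl))]
          · rcases Np2 x hxy.symm with rfl | rfl | rfl
            exacts [(ha'e (Sym2.mem_mk_left _ _)).elim,
              Or.inr (Or.inr (Or.inl (congrArg ft Sym2.eq_swap))),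
              Or.inr (Or.inr (Or.inr (congrArg ft Sym2.eq_swap)))]
    · exact (tri_no α β γ h1 h2 h3 a a' x y haK hx hm1 hm2).elim
  -- the six "new edge vs old edge" facts
  have main_uv : ∀ x y : V, H.Adj x y → x ∉ ({u, v, w} : Set V) → y ∉ ({u, v, w} : Set V) →
      EdgeConflict H s(u, v) s(x, y) → g s(u, v) ≠ g s(x, y) := by
    intro x y hxy hx hy hc
    rw [guv, gold x y hx hy]
    have h4 := tri_old u v w u' v' p1 p2 s1 s2 huK hvK hwK Nu Nv Nu' Nv' x y hxy hx hy hc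
    intro hEq
    apply hc0n
    rw [hEq]
    rcases h4 with h | h | h | h <;> rw [h] <;> simp
  have main_vw : ∀ x y : V, H.Adj x y → x ∉ ({u, v, w} : Set V) → y ∉ ({u, v, w} : Set V) →
      EdgeConflict H s(v, w) s(x, y) → g s(v, w) ≠ g s(x, y) := by
    intro x y hxy hx hy hc
    rw [gvw, gold x y hx hy]
    have h4 := tri_old v w u v' w' s1 s2 m1 m2 hvK hwK huK
      (fun z hz => by
        rcases Nv z hz with h | h | h
        exacts [Or.inr (Or.inl h), Or.inl h, Or.inr (Or.inr h)])
      (fun z hz => by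
        rcases Nw z hz with h | h | h
        exacts [Or.inr (Or.inl h), Or.inl h, Or.inr (Or.inr h)])
      Nv' Nw' x y hxy hx hy hc
    intro hEq
    apply hc1n
    rw [hEq]
    rcases h4 with h | h | h | h <;> rw [h] <;> simp
  have main_uw : ∀ x y : V, H.Adj x y → x ∉ ({u, v, w} : Set V) → y ∉ ({u, v, w} : Set V) →
      EdgeConflict H s(u, w) s(x, y) → g s(u, w) ≠ g s(x, y) := by
    intro x y hxy hx hy hc
    rw [guw, gold x y hx hy]
    have h4 := tri_old u w v u' w' p1 p2 m1 m2 huK hwK hvK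
      (fun z hz => by
        rcases Nu z hz with h | h | h
        exacts [Or.inr (Or.inl h), Or.inl h, Or.inr (Or.inr h)])
      Nw Nu' Nw' x y hxy hx hy hc
    intro hEq
    apply hc2n
    rw [hEq]
    rcases h4 with h | h | h | h <;> rw [h] <;> simp
  have main_ww' : ∀ x y : V, H.Adj x y → x ∉ ({u, v, w} : Set V) → y ∉ ({u, v, w} : Set V) →
      EdgeConflict H s(w, w') s(x, y) → g s(w, w') ≠ g s(x, y) := by
    intro x y hxy hx hy hc
    rw [gww', gold x y hx hy]
    have h4 := pend_old w u v w' m1 m2 n1 n2 n3 n4 hwK huK hvK Nw Nw' Nm1 Nm2 x y hxy hx hy hc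
    intro hEq
    apply hc3n
    rw [hEq]
    rcases h4 with h | h | h | h <;> rw [h] <;> simp
  have main_uu' : ∀ x y : V, H.Adj x y → x ∉ ({u, v, w} : Set V) → y ∉ ({u, v, w} : Set V) →
      EdgeConflict H s(u, u') s(x, y) → g s(u, u') ≠ g s(x, y) := by
    intro x y hxy hx hy hc
    rw [guu', gold x y hx hy]
    have h4 := pend_old u v w u' p1 p2 q1 q2 q3 q4 huK hvK hwK Nu Nu' Np1 Np2 x y hxy hx hy hc
    intro hEq
    apply hc4n
    rw [hEq]
    rcases h4 with h | h | h | h <;> rw [h] <;> simp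
  have main_vv' : ∀ x y : V, H.Adj x y → x ∉ ({u, v, w} : Set V) → y ∉ ({u, v, w} : Set V) →
      EdgeConflict H s(v, v') s(x, y) → g s(v, v') ≠ g s(x, y) := by
    intro x y hxy hx hy hc
    rw [gvv', gold x y hx hy]
    have h4 := pend_old v u w v' s1 s2 t1 t2 t3 t4 hvK huK hwK Nv Nv' Ns1 Ns2 x y hxy hx hy hc
    intro hEq
    apply hc5n
    rw [hEq]
    rcases h4 with h | h | h | h <;> rw [h] <;> simp
  -- classification of edges
  have hclass : ∀ x y : V, H.Adj x y →
      s(x, y) = s(u, v) ∨ s(x, y) = s(v, w) ∨ s(x, y) = s(u, w) ∨ s(x, y) = s(w, w') ∨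
      s(x, y) = s(u, u') ∨ s(x, y) = s(v, v') ∨
      (x ∉ ({u, v, w} : Set V) ∧ y ∉ ({u, v, w} : Set V)) := by
    intro x y hxy
    by_cases hx : x ∈ ({u, v, w} : Set V)
    · simp only [Set.mem_insert_iff, Set.mem_singleton_iff] at hx
      rcases hx with rfl | rfl | rfl
      · rcases Nu y hxy with rfl | rfl | rfl
        · exact Or.inl rfl
        · exact Or.inr (Or.inr (Or.inl rfl))
        · exact Or.inr (Or.inr (Or.inr (Or.inr (Or.inl rfl))))
      · rcases Nv y hxy with rfl | rfl | rfl
        · exact Or.inl Sym2.eq_swap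
        · exact Or.inr (Or.inl rfl)
        · exact Or.inr (Or.inr (Or.inr (Or.inr (Or.inr (Or.inl rfl)))))
      · rcases Nw y hxy with rfl | rfl | rfl
        · exact Or.inr (Or.inr (Or.inl Sym2.eq_swap))
        · exact Or.inr (Or.inl Sym2.eq_swap)
        · exact Or.inr (Or.inr (Or.inr (Or.inl rfl)))
    · by_cases hy : y ∈ ({u, v, w} : Set V)
      · simp only [Set.mem_insert_iff, Set.mem_singleton_iff] at hy
        rcases hy with rfl | rfl | rfl
        · rcases Nu x hxy.symm with rfl | rfl | rfl
          · exact Or.inl Sym2.eq_swap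
          · exact Or.inr (Or.inr (Or.inl Sym2.eq_swap))
          · exact Or.inr (Or.inr (Or.inr (Or.inr (Or.inl Sym2.eq_swap))))
        · rcases Nv x hxy.symm with rfl | rfl | rfl
          · exact Or.inl rfl
          · exact Or.inr (Or.inl Sym2.eq_swap)
          · exact Or.inr (Or.inr (Or.inr (Or.inr (Or.inr (Or.inl Sym2.eq_swap)))))
        · rcases Nw x hxy.symm with rfl | rfl | rfl
          · exact Or.inr (Or.inr (Or.inl rfl))
          · exact Or.inr (Or.inl rfl)
          · exact Or.inr (Or.inr (Or.inr (Or.inl Sym2.eq_swap)))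
      · exact Or.inr (Or.inr (Or.inr (Or.inr (Or.inr (Or.inr ⟨hx, hy⟩)))))
  -- final verification
  refine ⟨g, ?_⟩
  intro e₁
  induction e₁ using Sym2.ind with
  | _ x₁ y₁ =>
  intro he₁ e₂
  induction e₂ using Sym2.ind with
  | _ x₂ y₂ =>
  intro he₂ hconf
  rw [SimpleGraph.mem_edgeSet] at he₁ he₂
  rcases hclass x₁ y₁ he₁ with h1 | h1 | h1 | h1 | h1 | h1 | ⟨hx1, hy1⟩ <;>
    [rw [h1] at hconf ⊢; rw [h1] at hconf ⊢; rw [h1] at hconf ⊢;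
     rw [h1] at hconf ⊢; rw [h1] at hconf ⊢; rw [h1] at hconf ⊢; skip] <;>
    rcases hclass x₂ y₂ he₂ with h2 | h2 | h2 | h2 | h2 | h2 | ⟨hx2, hy2⟩ <;>
    [skip; skip; skip; skip; skip; skip; skip;
     skip; skip; skip; skip; skip; skip; skip;
     skip; skip; skip; skip; skip; skip; skip;
     skip; skip; skip; skip; skip; skip; skip;
     skip; skip; skip; skip; skip; skip; skip;
     skip; skip; skip; skip; skip; skip; skip;
     skip; skip; skip; skip; skip; skip; skip]
  -- (1,*) : e₁ = s(u,v)
  · rw [h2] at hconf; exact absurd rfl hconf.1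
  · rw [h2] at hconf ⊢; rw [guv, gvw]; exact G1
  · rw [h2] at hconf ⊢; rw [guv, guw]; exact G2
  · rw [h2] at hconf ⊢; rw [guv, gww']; exact G7
  · rw [h2] at hconf; exact (nc u u' huK hu'out s(u, v) (Sym2.mem_mk_left u v) hconf).elim
  · rw [h2] at hconf; exact (nc v v' hvK hv'out s(u, v) (Sym2.mem_mk_right u v) hconf).elim
  · exact main_uv x₂ y₂ he₂ hx2 hy2 hconf
  -- (2,*) : e₁ = s(v,w)
  · rw [h2] at hconf ⊢; rw [gvw, guv]; exact G1.symm
  · rw [h2] at hconf; exact absurd rfl hconf.1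
  · rw [h2] at hconf ⊢; rw [gvw, guw]; exact G3
  · rw [h2] at hconf; exact (nc w w' hwK hw'out s(v, w) (Sym2.mem_mk_right v w) hconf).elim
  · rw [h2] at hconf ⊢; rw [gvw, guu']; exact G8
  · rw [h2] at hconf; exact (nc v v' hvK hv'out s(v, w) (Sym2.mem_mk_left v w) hconf).elim
  · exact main_vw x₂ y₂ he₂ hx2 hy2 hconf
  -- (3,*) : e₁ = s(u,w)
  · rw [h2] at hconf ⊢; rw [guw, guv]; exact G2.symm
  · rw [h2] at hconf ⊢; rw [guw, gvw]; exact G3.symm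
  · rw [h2] at hconf; exact absurd rfl hconf.1
  · rw [h2] at hconf; exact (nc w w' hwK hw'out s(u, w) (Sym2.mem_mk_right u w) hconf).elim
  · rw [h2] at hconf; exact (nc u u' huK hu'out s(u, w) (Sym2.mem_mk_left u w) hconf).elim
  · rw [h2] at hconf ⊢; rw [guw, gvv']; exact G9
  · exact main_uw x₂ y₂ he₂ hx2 hy2 hconf
  -- (4,*) : e₁ = s(w,w')
  · rw [h2] at hconf ⊢; rw [gww', guv]; exact G7.symm
  · rw [h2] at hconf
    exact (nc w w' hwK hw'out s(v, w) (Sym2.mem_mk_right v w) (conflict_symm hconf)).elim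
  · rw [h2] at hconf
    exact (nc w w' hwK hw'out s(u, w) (Sym2.mem_mk_right u w) (conflict_symm hconf)).elim
  · rw [h2] at hconf; exact absurd rfl hconf.1
  · rw [h2] at hconf ⊢; rw [gww', guu']; exact G4
  · rw [h2] at hconf ⊢; rw [gww', gvv']; exact G5
  · exact main_ww' x₂ y₂ he₂ hx2 hy2 hconf
  -- (5,*) : e₁ = s(u,u')
  · rw [h2] at hconf
    exact (nc u u' huK hu'out s(u, v) (Sym2.mem_mk_left u v) (conflict_symm hconf)).elim
  · rw [h2] at hconf ⊢; rw [guu', gvw]; exact G8.symm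
  · rw [h2] at hconf
    exact (nc u u' huK hu'out s(u, w) (Sym2.mem_mk_left u w) (conflict_symm hconf)).elim
  · rw [h2] at hconf ⊢; rw [guu', gww']; exact G4.symm
  · rw [h2] at hconf; exact absurd rfl hconf.1
  · rw [h2] at hconf ⊢; rw [guu', gvv']; exact G6
  · exact main_uu' x₂ y₂ he₂ hx2 hy2 hconf
  -- (6,*) : e₁ = s(v,v')
  · rw [h2] at hconf
    exact (nc v v' hvK hv'out s(u, v) (Sym2.mem_mk_right u v) (conflict_symm hconf)).elim
  · rw [h2] at hconf
    exact (nc v v' hvK hv'out s(v, w) (Sym2.mem_mk_left v w) (conflict_symm hconf)).elim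
  · rw [h2] at hconf ⊢; rw [gvv', guw]; exact G9.symm
  · rw [h2] at hconf ⊢; rw [gvv', gww']; exact G5.symm
  · rw [h2] at hconf ⊢; rw [gvv', guu']; exact G6.symm
  · rw [h2] at hconf; exact absurd rfl hconf.1
  · exact main_vv' x₂ y₂ he₂ hx2 hy2 hconf
  -- (old,*) : e₁ outside the triangle
  · rw [h2] at hconf ⊢; exact (main_uv x₁ y₁ he₁ hx1 hy1 (conflict_symm hconf)).symm
  · rw [h2] at hconf ⊢; exact (main_vw x₁ y₁ he₁ hx1 hy1 (conflict_symm hconf)).symm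
  · rw [h2] at hconf ⊢; exact (main_uw x₁ y₁ he₁ hx1 hy1 (conflict_symm hconf)).symm
  · rw [h2] at hconf ⊢; exact (main_ww' x₁ y₁ he₁ hx1 hy1 (conflict_symm hconf)).symm
  · rw [h2] at hconf ⊢; exact (main_uu' x₁ y₁ he₁ hx1 hy1 (conflict_symm hconf)).symm
  · rw [h2] at hconf ⊢; exact (main_vv' x₁ y₁ he₁ hx1 hy1 (conflict_symm hconf)).symm
  · have hx1c : x₁ ∈ ({u, v, w}ᶜ : Set V) := hx1
    have hy1c : y₁ ∈ ({u, v, w}ᶜ : Set V) := hy1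
    have hx2c : x₂ ∈ ({u, v, w}ᶜ : Set V) := hx2
    have hy2c : y₂ ∈ ({u, v, w}ᶜ : Set V) := hy2
    rw [gold x₁ y₁ hx1 hy1, gold x₂ y₂ hx2 hy2, hftv x₁ y₁ hx1c hy1c, hftv x₂ y₂ hx2c hy2c]
    exact hf _ (hedge x₁ y₁ hx1c hy1c he₁) _ (hedge x₂ y₂ hx2c hy2c he₂)
      (conflict_lift H _ hx1c hy1c hx2c hy2c hconf)
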